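/- Let β and β' be words related by a single 2-move swapping positions (k, k+1) with c_{i_k i_{k+1}} = 0. Then the exchange matrices satisfy B_{β'} = P B_β P^T where P is the permutation matrix of the transposition (k, k+1); i.e., b'_{σ(s)σ(t)} = b_{st} for the transposition σ = (k, k+1). -/
import Mathlib


variable {I : Type*}

/-- `NextOcc i s t`: position `t` is the next occurrence after `s` of the color `i_s`
in the word `i : Fin r → I`, i.e. `t = s⁺` (equivalently `s = t⁻`). -/
def NextOcc {r : ℕ} (i : Fin r → I) (s t : Fin r) : Prop :=
  s < t ∧ i t = i s ∧ ∀ u, s < u → u < t → i u ≠ i s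

/-- The condition for `b_{st} = 1` in the exchange matrix `B_β`:
either `s = t⁻`, or `t < s < t⁺ < s⁺` (in the extended integers) and `d(i_s, i_t) = 1`. -/
def ExArrow {r : ℕ} (d : I → I → ℕ) (i : Fin r → I) (s t : Fin r) : Prop :=
  NextOcc i s t ∨
    (t < s ∧ d (i s) (i t) = 1 ∧
      ∃ tp, NextOcc i t tp ∧ s < tp ∧ ∀ sp, NextOcc i s sp → tp < sp)

open scoped Classical in
/-- The exchange matrix `B_β` of the word `β = (i_1, …, i_r)`:
`b_{st} = 1` if `s = t⁻` or `t < s < t⁺ < s⁺` with `d(i_s,i_t) = 1`;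
`b_{st} = -1` if `t = s⁻` or `s < t < s⁺ < t⁺` with `d(i_s,i_t) = 1`;
`b_{st} = 0` otherwise. -/
noncomputable def Bword {r : ℕ} (d : I → I → ℕ) (i : Fin r → I) (s t : Fin r) : ℤ :=
  if ExArrow d i s t then 1 else if ExArrow d i t s then -1 else 0

lemma swap_val' {r : ℕ} (a b u : Fin r) :
    ((Equiv.swap a b) u : Fin r).val =
      if u.val = a.val then b.val else if u.val = b.val then a.val else u.val := by
  simp only [Equiv.swap_apply_def, Fin.ext_iff]
  split_ifs <;> simp_all

lemma swap_lt_iff' {r : ℕ} {a b : Fin r} (hab : (b : ℕ) = (a : ℕ) + 1)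
    {u v : Fin r} (h1 : ¬(u = a ∧ v = b)) (h2 : ¬(u = b ∧ v = a)) :
    Equiv.swap a b u < Equiv.swap a b v ↔ u < v := by
  simp only [not_and_or, Fin.ext_iff, Ne] at h1 h2
  rw [Fin.lt_def, Fin.lt_def, swap_val', swap_val']
  split_ifs <;> omega

lemma nextOcc_swap' {r : ℕ} {a b : Fin r} (hab : (b : ℕ) = (a : ℕ) + 1)
    {i : Fin r → I} (hne : i a ≠ i b) {s t : Fin r} (h : NextOcc i s t) :
    NextOcc (i ∘ Equiv.swap a b) (Equiv.swap a b s) (Equiv.swap a b t) := by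
  obtain ⟨hst, hit, hmid⟩ := h
  have hp1 : ¬(s = a ∧ t = b) := by rintro ⟨rfl, rfl⟩; exact hne hit.symm
  have hp2 : ¬(s = b ∧ t = a) := by rintro ⟨rfl, rfl⟩; exact hne hit
  refine ⟨(swap_lt_iff' hab hp1 hp2).mpr hst, by simpa using hit, ?_⟩
  intro u h1 h2
  obtain ⟨v, rfl⟩ : ∃ v, Equiv.swap a b v = u :=
    ⟨Equiv.swap a b u, Equiv.swap_apply_self a b u⟩
  simp only [Function.comp_apply, Equiv.swap_apply_self]
  rcases lt_or_ge s v with hsv | hsv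
  · rcases lt_or_ge v t with hvt | hvt
    · exact hmid v hsv hvt
    · by_cases hp : (v = a ∧ t = b) ∨ (v = b ∧ t = a)
      · rcases hp with ⟨rfl, rfl⟩ | ⟨rfl, rfl⟩
        · exfalso; rw [Fin.le_def] at hvt; omega
        · exact fun hcon => hne (hit.trans hcon.symm)
      · rw [not_or] at hp
        exact absurd ((swap_lt_iff' hab hp.1 hp.2).mp h2) (not_lt.mpr hvt)
  · by_cases hp : (s = a ∧ v = b) ∨ (s = b ∧ v = a)
    · rcases hp with ⟨rfl, rfl⟩ | ⟨rfl, rfl⟩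
      · exfalso; rw [Fin.le_def] at hsv; omega
      · exact hne
    · rw [not_or] at hp
      exact absurd ((swap_lt_iff' hab hp.1 hp.2).mp h1) (not_lt.mpr hsv)

lemma nextOcc_swap_iff' {r : ℕ} {a b : Fin r} (hab : (b : ℕ) = (a : ℕ) + 1)
    {i : Fin r → I} (hne : i a ≠ i b) (s t : Fin r) :
    NextOcc (i ∘ Equiv.swap a b) (Equiv.swap a b s) (Equiv.swap a b t) ↔ NextOcc i s t := by
  constructor
  · intro h
    have hne' : (i ∘ Equiv.swap a b) a ≠ (i ∘ Equiv.swap a b) b := by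
      simpa using hne.symm
    have hw : (i ∘ Equiv.swap a b) ∘ Equiv.swap a b = i := by funext x; simp
    have := nextOcc_swap' hab hne' h
    rwa [hw, Equiv.swap_apply_self, Equiv.swap_apply_self] at this
  · exact nextOcc_swap' hab hne

lemma exArrow_swap' {r : ℕ} (d : I → I → ℕ) (hsym : ∀ a b, d a b = d b a)
    {a b : Fin r} (hab : (b : ℕ) = (a : ℕ) + 1) {i : Fin r → I}
    (hne : i a ≠ i b) (hd : d (i a) (i b) = 0) {s t : Fin r}
    (h : ExArrow d i s t) :
    ExArrow d (i ∘ Equiv.swap a b) (Equiv.swap a b s) (Equiv.swap a b t) := by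
  rcases h with h | ⟨hts, hdst, tp, htp, hstp, hmax⟩
  · exact Or.inl (nextOcc_swap' hab hne h)
  · refine Or.inr ⟨?_, by simpa using hdst, Equiv.swap a b tp,
      nextOcc_swap' hab hne htp, ?_, ?_⟩
    · refine (swap_lt_iff' hab ?_ ?_).mpr hts
      · rintro ⟨rfl, rfl⟩; rw [hsym] at hdst; omega
      · rintro ⟨rfl, rfl⟩; omega
    · refine (swap_lt_iff' hab ?_ ?_).mpr hstp
      · rintro ⟨rfl, rfl⟩; rw [← htp.2.1] at hdst; omega
      · rintro ⟨rfl, rfl⟩; rw [← htp.2.1, hsym] at hdst; omega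
    · intro sp' hsp'
      have e : Equiv.swap a b (Equiv.swap a b sp') = sp' := Equiv.swap_apply_self a b sp'
      have hsp : NextOcc i s (Equiv.swap a b sp') :=
        (nextOcc_swap_iff' hab hne s _).mp (by rwa [e])
      have hp1 : ¬(tp = a ∧ Equiv.swap a b sp' = b) := by
        rintro ⟨rfl, h2⟩
        have h3 : i b = i s := by rw [← h2]; exact hsp.2.1
        rw [htp.2.1, h3, hsym] at hd
        omega
      have hp2 : ¬(tp = b ∧ Equiv.swap a b sp' = a) := by
        rintro ⟨rfl, h2⟩
        have h3 : i a = i s := by rw [← h2]; exact hsp.2.1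
        rw [h3, htp.2.1] at hd
        omega
      have := (swap_lt_iff' hab hp1 hp2).mpr (hmax _ hsp)
      rwa [e] at this

lemma exArrow_swap_iff' {r : ℕ} (d : I → I → ℕ) (hsym : ∀ a b, d a b = d b a)
    {a b : Fin r} (hab : (b : ℕ) = (a : ℕ) + 1) {i : Fin r → I}
    (hne : i a ≠ i b) (hd : d (i a) (i b) = 0) (s t : Fin r) :
    ExArrow d (i ∘ Equiv.swap a b) (Equiv.swap a b s) (Equiv.swap a b t) ↔ ExArrow d i s t := by
  constructor
  · intro h
    have hne' : (i ∘ Equiv.swap a b) a ≠ (i ∘ Equiv.swap a b) b := by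
      simpa using hne.symm
    have hd' : d ((i ∘ Equiv.swap a b) a) ((i ∘ Equiv.swap a b) b) = 0 := by
      simpa [hsym (i b) (i a)] using hd
    have hw : (i ∘ Equiv.swap a b) ∘ Equiv.swap a b = i := by funext x; simp
    have := exArrow_swap' d hsym hab hne' hd' h
    rwa [hw, Equiv.swap_apply_self, Equiv.swap_apply_self] at this
  · exact exArrow_swap' d hsym hab hne hd

/-- If `β'` is obtained from `β` by a 2-move swapping positions `(k, k+1)` whose colors
are distinct and non-adjacent in the Dynkin diagram (`c_{i_k i_{k+1}} = 0`, i.e.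
`d(i_k, i_{k+1}) = 0`), then the exchange matrices satisfy `B_{β'} = P B_β Pᵀ` for the
transposition `P = (k, k+1)`: `b'_{σ(s) σ(t)} = b_{st}`. -/
theorem Bword_two_move {r : ℕ} (d : I → I → ℕ)
    (hsym : ∀ a b, d a b = d b a) (hdiag : ∀ a, d a a = 0)
    (i : Fin r → I) (k : ℕ) (hk : k + 1 < r)
    (hne : i ⟨k, Nat.lt_of_succ_lt hk⟩ ≠ i ⟨k + 1, hk⟩)
    (hd : d (i ⟨k, Nat.lt_of_succ_lt hk⟩) (i ⟨k + 1, hk⟩) = 0) :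
    ∀ s t : Fin r,
      Bword d (i ∘ Equiv.swap ⟨k, Nat.lt_of_succ_lt hk⟩ ⟨k + 1, hk⟩)
        (Equiv.swap ⟨k, Nat.lt_of_succ_lt hk⟩ ⟨k + 1, hk⟩ s)
        (Equiv.swap ⟨k, Nat.lt_of_succ_lt hk⟩ ⟨k + 1, hk⟩ t) =
      Bword d i s t := by
  intro s t
  have hab : ((⟨k + 1, hk⟩ : Fin r) : ℕ) = ((⟨k, Nat.lt_of_succ_lt hk⟩ : Fin r) : ℕ) + 1 := rfl
  have h1 := exArrow_swap_iff' d hsym hab hne hd s t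
  have h2 := exArrow_swap_iff' d hsym hab hne hd t s
  simp only [Bword]
  split_ifs <;> tauto
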